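/- arXiv:2204.12640 — 2 statements merged into one kernel-verified Lean document; each statement's English description precedes it below -/
import Mathlib

section
/- Let p, q ∈ [0, 1/4] and t ∈ [0, π]. Then |θ_p(t) − θ_q(t)| ≤ 7·|p − q|·t, where θ_p(t) := arcsin(p·sin t / r_p(t)) is the argument of the complex number 1 − p + p·e^{it}. -/
/-- The modulus of the complex number `1 - p + p·e^{it}`. -/
noncomputable def rMod (p t : ℝ) : ℝ :=
  Real.sqrt ((1 - p * (1 - Real.cos t)) ^ 2 + p ^ 2 * Real.sin t ^ 2)

/-- The argument of the complex number `1 - p + p·e^{it}` (for `t ∈ [0, π]`). -/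
noncomputable def thetaArg (p t : ℝ) : ℝ :=
  Real.arcsin (p * Real.sin t / rMod p t)

lemma denom_pos {x t : ℝ} (hx : x ∈ Set.Icc (0 : ℝ) (1/4)) :
    (1:ℝ)/2 ≤ 1 - x * (1 - Real.cos t) := by
  obtain ⟨hx0, hx1⟩ := hx
  nlinarith [Real.neg_one_le_cos t, Real.cos_le_one t]

lemma thetaArg_eq_arctan {x t : ℝ} (hx : x ∈ Set.Icc (0 : ℝ) (1/4)) :
    thetaArg x t = Real.arctan (x * Real.sin t / (1 - x * (1 - Real.cos t))) := by
  set d : ℝ := 1 - x * (1 - Real.cos t) with hd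
  have hdpos : 0 < d := lt_of_lt_of_le (by norm_num) (denom_pos hx)
  set s : ℝ := Real.sin t with hs
  rw [Real.arctan_eq_arcsin]
  unfold thetaArg
  congr 1
  have h1 : 1 + (x * s / d) ^ 2 = (d ^ 2 + x ^ 2 * s ^ 2) / d ^ 2 := by
    field_simp
  have hr : rMod x t = Real.sqrt (d ^ 2 + x ^ 2 * s ^ 2) := rfl
  have h2 : Real.sqrt (1 + (x * s / d) ^ 2) = rMod x t / d := by
    rw [h1, Real.sqrt_div' _ (sq_nonneg d), Real.sqrt_sq hdpos.le, hr]
  rw [h2, ← hs]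
  have hrpos : 0 < rMod x t := by
    rw [hr]; positivity
  field_simp

lemma theta_hasDerivAt {t : ℝ} {x : ℝ} (hx : x ∈ Set.Icc (0 : ℝ) (1/4)) :
    HasDerivAt (fun y : ℝ => Real.arctan (y * Real.sin t / (1 - y * (1 - Real.cos t))))
      (Real.sin t / ((1 - x * (1 - Real.cos t)) ^ 2 + x ^ 2 * Real.sin t ^ 2)) x := by
  set a : ℝ := 1 - Real.cos t with ha
  set s : ℝ := Real.sin t with hs
  have hdpos : 0 < 1 - x * a := lt_of_lt_of_le (by norm_num) (denom_pos hx)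
  have hu : HasDerivAt (fun y : ℝ => y * s / (1 - y * a))
      ((s * (1 - x * a) - x * s * (-(1 * a))) / (1 - x * a) ^ 2) x := by
    have := ((hasDerivAt_id x).mul_const s).div
      (((hasDerivAt_id x).mul_const a).const_sub 1) hdpos.ne'
    exact this.congr_deriv (by simp only [id, one_mul])
  have h := (Real.hasDerivAt_arctan (x * s / (1 - x * a))).comp x hu
  refine h.congr_deriv (Eq.symm ?_)
  have h2 : (x * s / (1 - x * a)) ^ 2 = x ^ 2 * s ^ 2 / (1 - x * a) ^ 2 := by
    rw [div_pow]; ring_nf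
  rw [h2]
  field_simp
  ring

theorem stmt_thm (p q t : ℝ) (hp : p ∈ Set.Icc (0 : ℝ) (1/4)) (hq : q ∈ Set.Icc (0 : ℝ) (1/4))
    (ht : t ∈ Set.Icc (0 : ℝ) Real.pi) :
    |thetaArg p t - thetaArg q t| ≤ 7 * |p - q| * t := by
  obtain ⟨ht0, htpi⟩ := ht
  have hsnn : 0 ≤ Real.sin t := Real.sin_nonneg_of_nonneg_of_le_pi ht0 htpi
  set s : ℝ := Real.sin t with hs
  set f : ℝ → ℝ := fun y => Real.arctan (y * s / (1 - y * (1 - Real.cos t))) with hf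
  have key : ‖f p - f q‖ ≤ (4 * s) * ‖p - q‖ := by
    apply Convex.norm_image_sub_le_of_norm_hasDerivWithin_le
      (f' := fun x => s / ((1 - x * (1 - Real.cos t)) ^ 2 + x ^ 2 * s ^ 2))
      (fun x hx => (theta_hasDerivAt hx).hasDerivWithinAt)
      (fun x hx => ?_) (convex_Icc _ _) hq hp
    have hd : (1:ℝ)/2 ≤ 1 - x * (1 - Real.cos t) := denom_pos hx
    have hden : (1:ℝ)/4 ≤ (1 - x * (1 - Real.cos t)) ^ 2 + x ^ 2 * s ^ 2 := by
      nlinarith [sq_nonneg (x * s)]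
    rw [Real.norm_eq_abs, abs_div, abs_of_nonneg hsnn,
      abs_of_nonneg (by nlinarith : (0:ℝ) ≤ (1 - x * (1 - Real.cos t)) ^ 2 + x ^ 2 * s ^ 2)]
    rw [div_le_iff₀ (by linarith)]
    nlinarith
  rw [thetaArg_eq_arctan hp, thetaArg_eq_arctan hq]
  have hst : s ≤ t := Real.sin_le ht0
  have habs : |p - q| = ‖p - q‖ := rfl
  calc |f p - f q| ≤ (4 * s) * ‖p - q‖ := key
    _ ≤ 7 * |p - q| * t := by
        rw [← habs]
        nlinarith [abs_nonneg (p - q)]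
end

section
/- Let p, q ∈ [0, 1/4] and let n ≥ 16 be a natural number with n(p+q) > 1/2 and n·|p−q| ≥ √(n(p+q)). Suppose X, X' ~ Bin(n,p) and Y, Y' ~ Bin(n,q) are mutually independent. Then Δ := E[|X−Y| + |X'−Y'| − |X−X'| − |Y−Y'|] ≥ (1/16)·n·|p−q|. -/
open MeasureTheory ProbabilityTheory

/-- The binomial distribution `Bin(n, p)`, as a measure on `ℝ` supported on `{0, 1, …, n}`. -/
noncomputable def binomialMeasure (n : ℕ) (p : ℝ) : Measure ℝ :=
  ∑ k ∈ Finset.range (n + 1),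
    ENNReal.ofReal ((n.choose k : ℝ) * p ^ k * (1 - p) ^ (n - k)) • Measure.dirac (k : ℝ)

open Finset
open scoped Classical

set_option maxHeartbeats 1000000

namespace BinomGap

noncomputable def w (p : ℝ) (n k : ℕ) : ℝ := (n.choose k : ℝ) * p ^ k * (1 - p) ^ (n - k)

lemma w_nonneg {p : ℝ} (h0 : 0 ≤ p) (h1 : p ≤ 1) (n k : ℕ) : 0 ≤ w p n k := by
  have h2 : (0:ℝ) ≤ 1 - p := by linarith
  exact mul_nonneg (mul_nonneg (by positivity) (pow_nonneg h0 _)) (pow_nonneg h2 _)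

lemma w_eq_zero {p : ℝ} {n k : ℕ} (h : n < k) : w p n k = 0 := by
  simp [w, Nat.choose_eq_zero_of_lt h]

lemma w_zero_left (p : ℝ) (n : ℕ) : w p n 0 = (1 - p) ^ n := by simp [w]

lemma w_succ_succ (p : ℝ) (n k : ℕ) :
    w p (n+1) (k+1) = (1-p) * w p n (k+1) + p * w p n k := by
  rcases le_or_gt (k+1) n with h | h
  · have e1 : n + 1 - (k+1) = n - (k+1) + 1 := by omega
    have e2 : n - k = n - (k+1) + 1 := by omega
    simp only [w, Nat.choose_succ_succ, e1, e2, pow_succ]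
    push_cast
    ring
  · rcases Nat.eq_or_lt_of_le h with h' | h'
    · -- k + 1 = n + 1? h : n < k+1 means n ≤ k; h' : n+1 = k+1 i.e. n = k
      have hk : k = n := by omega
      subst hk
      simp [w, Nat.choose_eq_zero_of_lt (Nat.lt_succ_self k), Nat.choose_self]
      ring
    · have h1 : n < k := by omega
      have h2 : n + 1 < k + 1 := by omega
      simp [w_eq_zero h1, w_eq_zero h2, w_eq_zero (show n < k + 1 by omega)]

lemma transfer (p : ℝ) (n : ℕ) (f : ℕ → ℝ) :
    ∑ j ∈ range (n+2), w p (n+1) j * f j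
      = (1-p) * ∑ j ∈ range (n+1), w p n j * f j
        + p * ∑ j ∈ range (n+1), w p n j * f (j+1) := by
  have key : ∀ g : ℕ → ℝ, ∑ j ∈ range (n+1), w p n (j+1) * g (j+1) + w p n 0 * g 0
      = ∑ j ∈ range (n+1), w p n j * g j := by
    intro g
    rw [Finset.sum_range_succ, w_eq_zero (Nat.lt_succ_self n)]
    rw [show (∑ j ∈ range (n+1), w p n j * g j) =
      ∑ j ∈ range n, w p n (j+1) * g (j+1) + w p n 0 * g 0 from Finset.sum_range_succ' _ n]
    ring
  rw [Finset.sum_range_succ']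
  have h0 : w p (n+1) 0 * f 0 = (1-p) * (w p n 0 * f 0) := by
    simp [w_zero_left, pow_succ]; ring
  calc ∑ j ∈ range (n+1), w p (n+1) (j+1) * f (j+1) + w p (n+1) 0 * f 0
      = (∑ j ∈ range (n+1), ((1-p) * (w p n (j+1) * f (j+1)) + p * (w p n j * f (j+1))))
        + (1-p) * (w p n 0 * f 0) := by
        rw [h0]; congr 1; apply Finset.sum_congr rfl; intro j _; rw [w_succ_succ]; ring
    _ = (1-p) * (∑ j ∈ range (n+1), w p n (j+1) * f (j+1) + w p n 0 * f 0)
        + p * ∑ j ∈ range (n+1), w p n j * f (j+1) := by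
        rw [Finset.sum_add_distrib, ← Finset.mul_sum, ← Finset.mul_sum]; ring
    _ = _ := by rw [key]

lemma mass (p : ℝ) (n : ℕ) : ∑ j ∈ range (n+1), w p n j = 1 := by
  induction n with
  | zero => simp [w]
  | succ n ih =>
      have t := transfer p n (fun _ => 1)
      simp only [mul_one] at t
      rw [t, ih]; ring

lemma moment1 (p : ℝ) (n : ℕ) : ∑ j ∈ range (n+1), w p n j * (j:ℝ) = n * p := by
  induction n with
  | zero => simp
  | succ n ih =>
      have t := transfer p n (fun j => (j:ℝ))
      rw [t, ih]
      have : ∑ j ∈ range (n+1), w p n j * ((j:ℝ)+1)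
          = ∑ j ∈ range (n+1), (w p n j * (j:ℝ) + w p n j) := by
        apply Finset.sum_congr rfl; intro j _; ring
      push_cast
      rw [this, Finset.sum_add_distrib, ih, mass]
      ring

lemma moment2 (p : ℝ) (n : ℕ) :
    ∑ j ∈ range (n+1), w p n j * (j:ℝ)^2 = n * p + n * (n-1) * p^2 := by
  induction n with
  | zero => simp
  | succ n ih =>
      have t := transfer p n (fun j => (j:ℝ)^2)
      rw [t, ih]
      have : ∑ j ∈ range (n+1), w p n j * ((j:ℝ)+1)^2
          = ∑ j ∈ range (n+1), (w p n j * (j:ℝ)^2 + 2 * (w p n j * (j:ℝ)) + w p n j) := by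
        apply Finset.sum_congr rfl; intro j _; ring
      push_cast
      rw [this, Finset.sum_add_distrib, Finset.sum_add_distrib, ih, ← Finset.mul_sum,
        moment1, mass]
      ring


noncomputable def cc (p : ℝ) (n m : ℕ) : ℝ := ∑ j ∈ range (n+1), w p n j * w p n (j + m)

lemma cc_nonneg {p : ℝ} (h0 : 0 ≤ p) (h1 : p ≤ 1) (n m : ℕ) : 0 ≤ cc p n m :=
  Finset.sum_nonneg fun j _ => mul_nonneg (w_nonneg h0 h1 _ _) (w_nonneg h0 h1 _ _)

lemma cc_eq_zero {p : ℝ} {n m : ℕ} (h : n < m) : cc p n m = 0 := by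
  apply Finset.sum_eq_zero; intro j _
  rw [w_eq_zero (show n < j + m by omega), mul_zero]

-- ∑_j w_n(j) * w_{n+1}(j+m+1)
lemma sumB (p : ℝ) (n m : ℕ) :
    ∑ j ∈ range (n+1), w p n j * w p (n+1) (j + (m+1))
      = (1-p) * cc p n (m+1) + p * cc p n m := by
  have h : ∀ j : ℕ, w p (n+1) (j + (m+1)) = (1-p) * w p n (j + (m+1)) + p * w p n (j + m) := by
    intro j
    exact w_succ_succ p n (j + m)
  calc ∑ j ∈ range (n+1), w p n j * w p (n+1) (j + (m+1))
      = ∑ j ∈ range (n+1), ((1-p) * (w p n j * w p n (j + (m+1))) + p * (w p n j * w p n (j + m))) := by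
        apply Finset.sum_congr rfl; intro j _; rw [h]; ring
    _ = _ := by rw [Finset.sum_add_distrib, ← Finset.mul_sum, ← Finset.mul_sum]; rfl

lemma sumA (p : ℝ) (n : ℕ) :
    ∑ j ∈ range (n+1), w p n j * w p (n+1) j = (1-p) * cc p n 0 + p * cc p n 1 := by
  have t := transfer p n (fun j => w p n j)
  have e : ∑ j ∈ range (n+2), w p (n+1) j * w p n j
      = ∑ j ∈ range (n+1), w p n j * w p (n+1) j := by
    rw [Finset.sum_range_succ, w_eq_zero (Nat.lt_succ_self n), mul_zero, add_zero]
    apply Finset.sum_congr rfl; intro j _; ring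
  rw [← e, t]
  have e0 : cc p n 0 = ∑ j ∈ range (n+1), w p n j * w p n j := by
    unfold cc; apply Finset.sum_congr rfl; intro j _; norm_num
  rw [e0]; rfl

lemma cc_rec0 (p : ℝ) (n : ℕ) :
    cc p (n+1) 0 = ((1-p)^2 + p^2) * cc p n 0 + 2*p*(1-p) * cc p n 1 := by
  have t := transfer p n (fun j => w p (n+1) j)
  have lhs : cc p (n+1) 0 = ∑ j ∈ range (n+2), w p (n+1) j * w p (n+1) j := by
    unfold cc; apply Finset.sum_congr rfl; intro j _; norm_num
  have s2 : ∑ j ∈ range (n+1), w p n j * w p (n+1) (j+1)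
      = (1-p) * cc p n 1 + p * cc p n 0 := by
    have := sumB p n 0
    simpa using this
  rw [lhs, t, sumA, s2]
  ring

lemma cc_rec (p : ℝ) (n m : ℕ) :
    cc p (n+1) (m+1) = ((1-p)^2 + p^2) * cc p n (m+1)
      + p*(1-p) * (cc p n m + cc p n (m+2)) := by
  have t := transfer p n (fun j => w p (n+1) (j + (m+1)))
  have lhs : cc p (n+1) (m+1) = ∑ j ∈ range (n+2), w p (n+1) j * w p (n+1) (j + (m+1)) := rfl
  have s2 : ∑ j ∈ range (n+1), w p n j * w p (n+1) ((j+1) + (m+1))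
      = (1-p) * cc p n (m+2) + p * cc p n (m+1) := by
    have h := sumB p n (m+1)
    have e : ∀ j : ℕ, (j+1) + (m+1) = j + (m+2) := by intro j; omega
    calc ∑ j ∈ range (n+1), w p n j * w p (n+1) ((j+1) + (m+1))
        = ∑ j ∈ range (n+1), w p n j * w p (n+1) (j + (m+2)) := by
          apply Finset.sum_congr rfl; intro j _; rw [e]
      _ = _ := h
  rw [lhs, t, sumB, s2]
  ring

lemma cc_mono {p : ℝ} (h0 : 0 ≤ p) (h1 : p ≤ 1) (n : ℕ) :
    ∀ m, cc p n (m+1) ≤ cc p n m := by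
  induction n with
  | zero =>
      intro m
      have h : ∀ m', cc p 0 m' = w p 0 0 * w p 0 m' := by
        intro m'; unfold cc; simp
      rw [h, h]
      rcases Nat.eq_zero_or_pos m with hm | hm
      · subst hm
        rw [w_eq_zero (show 0 < 0 + 1 by omega), mul_zero]
        simp [w]
      · rw [w_eq_zero (show 0 < m + 1 by omega), w_eq_zero (show 0 < m by omega)]
  | succ n ih =>
      intro m
      have hpq : 0 ≤ p * (1-p) := mul_nonneg h0 (by linarith)
      have hq2 : 0 ≤ (1-p)^2 + p^2 - p*(1-p) := by nlinarith [sq_nonneg (1 - 2*p)]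
      cases m with
      | zero =>
          rw [cc_rec p n 0, cc_rec0]
          have h01 := ih 0
          have h12 := ih 1
          nlinarith [mul_nonneg hq2 (sub_nonneg.2 h01), mul_nonneg hpq (sub_nonneg.2 h12)]
      | succ m' =>
          rw [cc_rec p n m', cc_rec p n (m'+1)]
          have hA := ih (m'+1)
          have hB := ih m'
          have hC := ih (m'+2)
          nlinarith [mul_nonneg hq2 (sub_nonneg.2 hA), mul_nonneg hpq (sub_nonneg.2 hB),
            mul_nonneg hpq (sub_nonneg.2 hC)]


lemma group (p : ℝ) (n : ℕ) (g : ℕ → ℝ) :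
    ∑ j ∈ range (n+1), ∑ k ∈ range (n+1), w p n j * w p n k * g (Nat.dist j k)
      = g 0 * cc p n 0 + 2 * ∑ m ∈ Icc 1 n, g m * cc p n m := by
  classical
  set F : ℕ × ℕ → ℝ := fun x => w p n x.1 * w p n x.2 * g (Nat.dist x.1 x.2) with hF
  set s : Finset (ℕ × ℕ) := range (n+1) ×ˢ range (n+1) with hs
  have hdouble : ∑ j ∈ range (n+1), ∑ k ∈ range (n+1), w p n j * w p n k * g (Nat.dist j k)
      = ∑ x ∈ s, F x := by rw [Finset.sum_product]
  -- cross sum: pairs with j < k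
  have hcross : ∑ x ∈ s.filter (fun x => x.1 < x.2), F x
      = ∑ m ∈ Icc 1 n, g m * cc p n m := by
    have hrhs : ∑ m ∈ Icc 1 n, g m * cc p n m
        = ∑ y ∈ (Icc 1 n) ×ˢ (range (n+1)), (w p n y.2 * w p n (y.2 + y.1) * g y.1) := by
      rw [Finset.sum_product]
      apply Finset.sum_congr rfl; intro m _
      rw [cc, Finset.mul_sum]
      apply Finset.sum_congr rfl; intro j _; ring
    rw [hrhs]
    have hsub : ∑ y ∈ (Icc 1 n) ×ˢ (range (n+1)), (w p n y.2 * w p n (y.2 + y.1) * g y.1)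
        = ∑ y ∈ ((Icc 1 n) ×ˢ (range (n+1))).filter (fun y => y.1 + y.2 ≤ n),
            (w p n y.2 * w p n (y.2 + y.1) * g y.1) := by
      symm
      apply Finset.sum_subset (Finset.filter_subset _ _)
      intro y _ hy
      rw [Finset.mem_filter] at hy
      push_neg at hy
      rcases Classical.em (y ∈ (Icc 1 n) ×ˢ (range (n+1))) with h | h
      · have : n < y.2 + y.1 := by
          have := hy h; omega
        rw [w_eq_zero this, mul_zero, zero_mul]
      · exact absurd ‹_› h
    rw [hsub]
    refine Finset.sum_nbij' (i := fun x => (x.2 - x.1, x.1)) (j := fun y => (y.2, y.2 + y.1))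
      ?_ ?_ ?_ ?_ ?_
    · rintro ⟨a1, a2⟩ ha
      simp [hs, Finset.mem_filter, Finset.mem_product, Finset.mem_range, Finset.mem_Icc] at ha ⊢
      omega
    · rintro ⟨a1, a2⟩ ha
      simp [hs, Finset.mem_filter, Finset.mem_product, Finset.mem_range, Finset.mem_Icc] at ha ⊢
      omega
    · rintro ⟨a1, a2⟩ ha
      simp [hs, Finset.mem_filter, Finset.mem_product, Finset.mem_range] at ha
      simp only [Prod.mk.injEq, true_and, and_true]
      omega
    · rintro ⟨a1, a2⟩ ha
      simp [Finset.mem_filter, Finset.mem_product, Finset.mem_range, Finset.mem_Icc] at ha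
      simp only [Prod.mk.injEq, true_and, and_true]
      omega
    · rintro ⟨a1, a2⟩ ha
      simp [hs, Finset.mem_filter, Finset.mem_product, Finset.mem_range] at ha
      simp only [hF]
      have hd : Nat.dist a1 a2 = a2 - a1 := Nat.dist_eq_sub_of_le (le_of_lt ha.2)
      have he : a1 + (a2 - a1) = a2 := by omega
      rw [hd, he]
  -- swap symmetry
  have hswap : ∑ x ∈ s.filter (fun x => x.2 < x.1), F x
      = ∑ x ∈ s.filter (fun x => x.1 < x.2), F x := by
    refine Finset.sum_nbij' (i := fun x => (x.2, x.1)) (j := fun x => (x.2, x.1))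
      ?_ ?_ ?_ ?_ ?_
    · intro a ha; simp only [Finset.mem_filter, hs, Finset.mem_product] at ha ⊢; tauto
    · intro a ha; simp only [Finset.mem_filter, hs, Finset.mem_product] at ha ⊢; tauto
    · intro a _; simp
    · intro a _; simp
    · intro a _; simp only [hF, Nat.dist_comm]; ring
  -- diagonal
  have hdiag : ∑ x ∈ (s.filter (fun x => ¬ x.1 < x.2)).filter (fun x => ¬ x.2 < x.1), F x
      = g 0 * cc p n 0 := by
    have : ((s.filter (fun x => ¬ x.1 < x.2)).filter (fun x => ¬ x.2 < x.1))
        = (range (n+1)).image (fun j => (j, j)) := by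
      ext x
      simp only [Finset.mem_filter, hs, Finset.mem_product, Finset.mem_image, Finset.mem_range]
      constructor
      · rintro ⟨⟨⟨h1, h2⟩, h3⟩, h4⟩
        exact ⟨x.1, h1, by ext <;> simp <;> omega⟩
      · rintro ⟨j, hj, rfl⟩
        simp; omega
    rw [this, Finset.sum_image (by intro a _ b _ h; simpa using (Prod.ext_iff.1 h).1)]
    rw [cc, Finset.mul_sum]
    apply Finset.sum_congr rfl; intro j _
    simp only [hF, Nat.dist_self, Nat.add_zero]
    ring
  have split1 := Finset.sum_filter_add_sum_filter_not s (fun x => x.1 < x.2) F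
  have split2 := Finset.sum_filter_add_sum_filter_not (s.filter (fun x => ¬ x.1 < x.2))
    (fun x => x.2 < x.1) F
  have e2 : (s.filter (fun x => ¬ x.1 < x.2)).filter (fun x => x.2 < x.1)
      = s.filter (fun x => x.2 < x.1) := by
    rw [Finset.filter_filter]
    apply Finset.filter_congr
    intro x _; constructor
    · rintro ⟨_, h⟩; exact h
    · intro h; omega
  rw [hdouble, ← split1, ← split2, e2, hswap, hcross, hdiag]
  ring


lemma abel (P g : ℕ → ℝ) : ∀ N : ℕ, ∑ k ∈ range (N+1), g k * P k
      = (∑ a ∈ range (N+1), (P a - P (a+1)) * (∑ k ∈ range (a+1), g k))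
        + P (N+1) * ∑ k ∈ range (N+1), g k
  | 0 => by simp; ring
  | (N+1) => by
      have ih := abel P g N
      rw [Finset.sum_range_succ (f := fun k => g k * P k), ih]
      rw [Finset.sum_range_succ (f := fun a => (P a - P (a+1)) * (∑ k ∈ range (a+1), g k)) (N+1)]
      rw [Finset.sum_range_succ g (N+1)]
      ring

lemma sum_Icc_one (N : ℕ) (f : ℕ → ℝ) : ∑ m ∈ Icc 1 N, f m = ∑ k ∈ range N, f (k+1) := by
  rw [← Finset.Ico_add_one_right_eq_Icc, Finset.sum_Ico_eq_sum_range]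
  simp [add_comm]

lemma key (P : ℕ → ℝ) (N : ℕ) (hmono : ∀ k, P (k+1) ≤ P k) (hzero : ∀ k, N < k → P k = 0)
    (hmass : P 0 + 2 * ∑ m ∈ Icc 1 N, P m = 1) :
    (∑ k ∈ range (N+1), (k:ℝ) * P k)^2 ≤ (3/8) * ∑ k ∈ range (N+1), (k:ℝ)^2 * P k := by
  set d : ℕ → ℝ := fun a => P a - P (a+1) with hd
  have hd0 : ∀ a, 0 ≤ d a := fun a => by simp only [hd]; linarith [hmono a]
  have hPN1 : P (N+1) = 0 := hzero _ (by omega)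
  have G1 : ∀ a : ℕ, ∑ k ∈ range (a+1), (k:ℝ) = a*(a+1)/2 := by
    intro a; induction a with
    | zero => simp
    | succ a ih => rw [Finset.sum_range_succ, ih]; push_cast; ring
  have G2 : ∀ a : ℕ, ∑ k ∈ range (a+1), (k:ℝ)^2 = a*(a+1)*(2*a+1)/6 := by
    intro a; induction a with
    | zero => simp
    | succ a ih => rw [Finset.sum_range_succ, ih]; push_cast; ring
  have GE : ∀ a : ℕ, ∑ k ∈ range (a+1), (if k = 0 then (1:ℝ) else 2) = 2*a+1 := by
    intro a; induction a with
    | zero => simp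
    | succ a ih => rw [Finset.sum_range_succ, ih]; simp; push_cast; ring
  have hS1 : ∑ k ∈ range (N+1), (k:ℝ) * P k = ∑ a ∈ range (N+1), d a * (a*(a+1)/2) := by
    rw [abel P (fun k => (k:ℝ)) N, hPN1]
    simp only [zero_mul, add_zero]
    exact Finset.sum_congr rfl fun a _ => by rw [G1]
  have hS2 : ∑ k ∈ range (N+1), (k:ℝ)^2 * P k
      = ∑ a ∈ range (N+1), d a * (a*(a+1)*(2*a+1)/6) := by
    rw [abel P (fun k => (k:ℝ)^2) N, hPN1]
    simp only [zero_mul, add_zero]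
    exact Finset.sum_congr rfl fun a _ => by rw [G2]
  have hMass : ∑ a ∈ range (N+1), d a * (2*(a:ℝ)+1) = 1 := by
    have he : ∑ k ∈ range (N+1), (if k = 0 then (1:ℝ) else 2) * P k
        = P 0 + 2 * ∑ m ∈ Icc 1 N, P m := by
      rw [Finset.sum_range_succ' (fun k => (if k = 0 then (1:ℝ) else 2) * P k) N]
      rw [sum_Icc_one]
      simp [Finset.mul_sum]
      ring
    have ha := abel P (fun k => (if k = 0 then (1:ℝ) else 2)) N
    rw [he, hPN1, hmass] at ha
    simp only [zero_mul, add_zero] at ha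
    calc ∑ a ∈ range (N+1), d a * (2*(a:ℝ)+1)
        = ∑ a ∈ range (N+1), (P a - P (a+1)) * ∑ k ∈ range (a+1), (if k = 0 then (1:ℝ) else 2) :=
          Finset.sum_congr rfl fun a _ => by rw [GE]
      _ = 1 := ha.symm
  -- Cauchy-Schwarz
  have hCS := Finset.sum_sq_le_sum_mul_sum_of_sq_eq_mul (range (N+1))
    (f := fun a => d a * (2*(a:ℝ)+1))
    (g := fun a => d a * ((a:ℝ)*(a+1)/2)^2 / (2*(a:ℝ)+1))
    (r := fun a => d a * ((a:ℝ)*(a+1)/2))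
    (fun a _ => mul_nonneg (hd0 a) (by positivity))
    (fun a _ => by
      apply div_nonneg (mul_nonneg (hd0 a) (by positivity)) (by positivity))
    (fun a _ => by
      have h2a : (2*(a:ℝ)+1) ≠ 0 := by positivity
      field_simp)
  have hpoint : ∑ a ∈ range (N+1), d a * ((a:ℝ)*(a+1)/2)^2 / (2*(a:ℝ)+1)
      ≤ (3/8) * ∑ a ∈ range (N+1), d a * ((a:ℝ)*(a+1)*(2*(a:ℝ)+1)/6) := by
    rw [Finset.mul_sum]
    apply Finset.sum_le_sum
    intro a _
    have h2a : (0:ℝ) < 2*(a:ℝ)+1 := by positivity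
    rw [div_le_iff₀ h2a]
    have hx : 0 ≤ d a := hd0 a
    revert hx
    generalize d a = x
    intro hx
    nlinarith [mul_nonneg hx (show (0:ℝ) ≤ (a:ℝ)*((a:ℝ)+1) by positivity)]
  rw [hS1, hS2]
  calc (∑ a ∈ range (N+1), d a * ((a:ℝ)*(a+1)/2))^2
      ≤ (∑ a ∈ range (N+1), d a * (2*(a:ℝ)+1))
        * ∑ a ∈ range (N+1), d a * ((a:ℝ)*(a+1)/2)^2 / (2*(a:ℝ)+1) := hCS
    _ = ∑ a ∈ range (N+1), d a * ((a:ℝ)*(a+1)/2)^2 / (2*(a:ℝ)+1) := by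
        rw [hMass, one_mul]
    _ ≤ (3/8) * ∑ a ∈ range (N+1), d a * ((a:ℝ)*(a+1)*(2*(a:ℝ)+1)/6) := hpoint


lemma dist_cast (j k : ℕ) : ((Nat.dist j k : ℕ) : ℝ) = |(j:ℝ) - (k:ℝ)| := by
  rcases le_total j k with h | h
  · rw [Nat.dist_eq_sub_of_le h, abs_sub_comm,
      abs_of_nonneg (sub_nonneg.2 (Nat.cast_le.2 h : (j:ℝ) ≤ k))]
    push_cast [h]
    ring
  · rw [Nat.dist_eq_sub_of_le_right h,
      abs_of_nonneg (sub_nonneg.2 (Nat.cast_le.2 h : (k:ℝ) ≤ j))]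
    push_cast [h]
    ring

lemma mass_cc (p : ℝ) (n : ℕ) : cc p n 0 + 2 * ∑ m ∈ Icc 1 n, cc p n m = 1 := by
  have hg := group p n (fun _ => (1:ℝ))
  have hl : ∑ j ∈ range (n+1), ∑ k ∈ range (n+1), w p n j * w p n k * 1 = 1 := by
    simp only [mul_one]
    rw [← Finset.sum_mul_sum, mass, one_mul]
  rw [hl] at hg
  simp only [one_mul] at hg
  linarith [hg]

lemma sqSum_moment (p : ℝ) (n : ℕ) :
    ∑ j ∈ range (n+1), ∑ k ∈ range (n+1), w p n j * w p n k * ((j:ℝ) - (k:ℝ))^2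
      = 2 * (n:ℝ) * p * (1-p) := by
  have inner : ∀ j : ℕ, ∑ k ∈ range (n+1), w p n j * w p n k * ((j:ℝ) - (k:ℝ))^2
      = w p n j * ((j:ℝ)^2 - 2*(j:ℝ)*((n:ℝ)*p) + ((n:ℝ)*p + (n:ℝ)*((n:ℝ)-1)*p^2)) := by
    intro j
    have step : ∀ k : ℕ, w p n j * w p n k * ((j:ℝ) - (k:ℝ))^2
        = w p n j * ((j:ℝ)^2 * w p n k - 2*(j:ℝ)*(w p n k * (k:ℝ)) + w p n k * (k:ℝ)^2) := by
      intro k; ring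
    rw [Finset.sum_congr rfl fun k _ => step k, ← Finset.mul_sum]
    congr 1
    rw [Finset.sum_add_distrib, Finset.sum_sub_distrib, ← Finset.mul_sum, ← Finset.mul_sum,
      mass, moment1, moment2]
    ring
  rw [Finset.sum_congr rfl fun j _ => inner j]
  have expand : ∀ j : ℕ, w p n j * ((j:ℝ)^2 - 2*(j:ℝ)*((n:ℝ)*p) + ((n:ℝ)*p + (n:ℝ)*((n:ℝ)-1)*p^2))
      = w p n j * (j:ℝ)^2 - 2*((n:ℝ)*p)*(w p n j * (j:ℝ))
        + ((n:ℝ)*p + (n:ℝ)*((n:ℝ)-1)*p^2) * w p n j := by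
    intro j; ring
  rw [Finset.sum_congr rfl fun j _ => expand j, Finset.sum_add_distrib, Finset.sum_sub_distrib,
    ← Finset.mul_sum, ← Finset.mul_sum, mass, moment1, moment2]
  ring

lemma gmd (p : ℝ) (hp0 : 0 ≤ p) (hp1 : p ≤ 1) (n : ℕ) :
    (∑ j ∈ range (n+1), ∑ k ∈ range (n+1), w p n j * w p n k * |(j:ℝ) - (k:ℝ)|)^2
      ≤ (3/2) * ((n:ℝ) * p * (1-p)) := by
  have habs : ∑ j ∈ range (n+1), ∑ k ∈ range (n+1), w p n j * w p n k * |(j:ℝ) - (k:ℝ)|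
      = 2 * ∑ m ∈ Icc 1 n, (m:ℝ) * cc p n m := by
    have hg := group p n (fun m => (m:ℝ))
    have he : ∑ j ∈ range (n+1), ∑ k ∈ range (n+1), w p n j * w p n k * ((Nat.dist j k : ℕ):ℝ)
        = ∑ j ∈ range (n+1), ∑ k ∈ range (n+1), w p n j * w p n k * |(j:ℝ) - (k:ℝ)| := by
      apply Finset.sum_congr rfl; intro j _; apply Finset.sum_congr rfl; intro k _
      rw [dist_cast]
    rw [he] at hg
    rw [hg]
    norm_num
  have hsq : ∑ j ∈ range (n+1), ∑ k ∈ range (n+1), w p n j * w p n k * ((j:ℝ) - (k:ℝ))^2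
      = 2 * ∑ m ∈ Icc 1 n, (m:ℝ)^2 * cc p n m := by
    have hg := group p n (fun m => ((m:ℝ))^2)
    have he : ∑ j ∈ range (n+1), ∑ k ∈ range (n+1), w p n j * w p n k * (((Nat.dist j k : ℕ):ℝ))^2
        = ∑ j ∈ range (n+1), ∑ k ∈ range (n+1), w p n j * w p n k * ((j:ℝ) - (k:ℝ))^2 := by
      apply Finset.sum_congr rfl; intro j _; apply Finset.sum_congr rfl; intro k _
      rw [dist_cast, sq_abs]
    rw [he] at hg
    rw [hg]
    norm_num
  have hrange1 : ∑ k ∈ range (n+1), (k:ℝ) * cc p n k = ∑ m ∈ Icc 1 n, (m:ℝ) * cc p n m := by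
    rw [Finset.sum_range_succ' (fun k => (k:ℝ) * cc p n k) n, sum_Icc_one]
    push_cast
    simp
  have hrange2 : ∑ k ∈ range (n+1), (k:ℝ)^2 * cc p n k
      = ∑ m ∈ Icc 1 n, (m:ℝ)^2 * cc p n m := by
    rw [Finset.sum_range_succ' (fun k => (k:ℝ)^2 * cc p n k) n, sum_Icc_one]
    push_cast
    simp
  have hk := key (cc p n) n (cc_mono hp0 hp1 n) (fun k hk => cc_eq_zero hk) (mass_cc p n)
  rw [hrange1, hrange2] at hk
  have hs := sqSum_moment p n
  rw [hsq] at hs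
  rw [habs]
  nlinarith [hk, hs]


lemma binom_eq (n : ℕ) (p : ℝ) :
    binomialMeasure n p = ∑ k ∈ range (n+1), ENNReal.ofReal (w p n k) • Measure.dirac (k:ℝ) :=
  rfl

lemma binom_apply (n : ℕ) (p : ℝ) (s : Set ℝ) (hs : MeasurableSet s) :
    binomialMeasure n p s
      = ∑ k ∈ range (n+1), ENNReal.ofReal (w p n k) * (if (k:ℝ) ∈ s then 1 else 0) := by
  rw [binom_eq, Measure.finset_sum_apply]
  apply Finset.sum_congr rfl
  intro k _
  rw [Measure.smul_apply, Measure.dirac_apply' _ hs]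
  simp [Set.indicator_apply]

-- the support set
noncomputable def SS (n : ℕ) : Finset ℝ := (range (n+1)).image (Nat.cast : ℕ → ℝ)

lemma binom_compl (n : ℕ) (p : ℝ) : binomialMeasure n p (↑(SS n) : Set ℝ)ᶜ = 0 := by
  rw [binom_apply _ _ _ (Finset.measurableSet (SS n)).compl]
  apply Finset.sum_eq_zero
  intro k hk
  have : (k:ℝ) ∈ (↑(SS n) : Set ℝ) := by
    simp only [SS, Finset.coe_image, Set.mem_image, Finset.mem_coe, Finset.mem_range]
    exact ⟨k, Finset.mem_range.1 hk, rfl⟩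
  simp [this]

lemma binom_singleton (n : ℕ) (p : ℝ) {j : ℕ} (hj : j ∈ range (n+1)) :
    binomialMeasure n p {(j:ℝ)} = ENNReal.ofReal (w p n j) := by
  rw [binom_apply _ _ _ (measurableSet_singleton _)]
  have : ∀ k ∈ range (n+1), ENNReal.ofReal (w p n k) * (if (k:ℝ) ∈ ({(j:ℝ)} : Set ℝ) then 1 else 0)
      = if k = j then ENNReal.ofReal (w p n k) else 0 := by
    intro k _
    by_cases h : k = j
    · subst h; simp
    · have : ((k:ℝ)) ≠ ((j:ℝ)) := by exact_mod_cast h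
      simp [h, this]
  refine Eq.trans (Finset.sum_congr rfl (g := fun k => if k = j then ENNReal.ofReal (w p n k) else 0)
    fun k hk => by convert this k hk) ?_
  rw [Finset.sum_ite_eq' (range (n+1)) j (fun k => ENNReal.ofReal (w p n k))]
  simp [hj]

section Var

variable {Ω : Type*} [MeasurableSpace Ω] (μ : Measure Ω) [IsProbabilityMeasure μ]
variable {X : Ω → ℝ} {p : ℝ} {n : ℕ}

lemma ae_range (hXm : Measurable X) (hX : Measure.map X μ = binomialMeasure n p) :
    ∀ᵐ ω ∂μ, ∃ j ∈ range (n+1), X ω = (j:ℝ) := by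
  have hms : MeasurableSet (↑(SS n) : Set ℝ)ᶜ := (Finset.measurableSet (SS n)).compl
  have h0 : μ (X ⁻¹' (↑(SS n) : Set ℝ)ᶜ) = 0 := by
    rw [← Measure.map_apply hXm hms, hX, binom_compl]
  rw [ae_iff]
  convert h0 using 2
  ext ω
  simp only [Set.mem_setOf_eq, Set.mem_preimage, Set.mem_compl_iff, SS, Finset.coe_image,
    Set.mem_image, Finset.mem_coe, Finset.mem_range]
  push_neg
  constructor
  · intro h j hj hje; exact h j hj hje.symm
  · intro h j hj hje; exact h j hj hje.symm

lemma preimage_singleton (hXm : Measurable X) (hX : Measure.map X μ = binomialMeasure n p)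
    {j : ℕ} (hj : j ∈ range (n+1)) :
    μ (X ⁻¹' {(j:ℝ)}) = ENNReal.ofReal (w p n j) := by
  rw [← Measure.map_apply hXm (measurableSet_singleton _), hX, binom_singleton n p hj]

lemma integrable_of_binom (hXm : Measurable X) (hX : Measure.map X μ = binomialMeasure n p) :
    Integrable X μ := by
  refine ⟨hXm.aestronglyMeasurable, ?_⟩
  apply MeasureTheory.HasFiniteIntegral.of_bounded (C := (n:ℝ))
  filter_upwards [ae_range μ hXm hX] with ω hω
  obtain ⟨j, hj, hje⟩ := hω
  rw [hje]
  rw [Real.norm_eq_abs, abs_of_nonneg (Nat.cast_nonneg j)]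
  exact_mod_cast Nat.lt_succ_iff.1 (Finset.mem_range.1 hj)

lemma integral_single (hp0 : 0 ≤ p) (hp1 : p ≤ 1) (hXm : Measurable X)
    (hX : Measure.map X μ = binomialMeasure n p) :
    ∫ ω, X ω ∂μ = ∑ j ∈ range (n+1), w p n j * (j:ℝ) := by
  have hae : ∀ᵐ ω ∂μ, X ω
      = ∑ j ∈ range (n+1), Set.indicator (X ⁻¹' {(j:ℝ)}) (fun _ => (j:ℝ)) ω := by
    filter_upwards [ae_range μ hXm hX] with ω hω
    obtain ⟨j₀, hj₀, hje⟩ := hω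
    have hterm : ∀ j ∈ range (n+1), Set.indicator (X ⁻¹' {(j:ℝ)}) (fun _ => (j:ℝ)) ω
        = if j = j₀ then (j₀:ℝ) else 0 := by
      intro j _
      rw [Set.indicator_apply]
      by_cases h : j = j₀
      · subst h; simp [Set.mem_preimage, hje]
      · have : ((j₀:ℝ)) ≠ ((j:ℝ)) := by exact_mod_cast (Ne.symm h)
        simp [Set.mem_preimage, hje, h, this]
    rw [Finset.sum_congr rfl hterm, Finset.sum_ite_eq' (range (n+1)) j₀ (fun _ => (j₀:ℝ))]
    simp [hj₀, hje]
  rw [integral_congr_ae hae, integral_finset_sum]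
  · apply Finset.sum_congr rfl
    intro j hj
    rw [integral_indicator_const _ (hXm (measurableSet_singleton _)), measureReal_def,
      preimage_singleton μ hXm hX hj]
    rw [smul_eq_mul, ENNReal.toReal_ofReal (w_nonneg hp0 hp1 n j)]
  · intro j _
    exact (integrable_const ((j:ℝ))).indicator (hXm (measurableSet_singleton _))

lemma integral_pair {X X' : Ω → ℝ} {p p' : ℝ} (hp0 : 0 ≤ p) (hp1 : p ≤ 1)
    (hp0' : 0 ≤ p') (hp1' : p' ≤ 1)
    (hXm : Measurable X) (hX'm : Measurable X')
    (hX : Measure.map X μ = binomialMeasure n p) (hX' : Measure.map X' μ = binomialMeasure n p')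
    (hind : IndepFun X X' μ) :
    ∫ ω, |X ω - X' ω| ∂μ
      = ∑ j ∈ range (n+1), ∑ k ∈ range (n+1), w p n j * w p' n k * |(j:ℝ) - (k:ℝ)| := by
  have hae : ∀ᵐ ω ∂μ, |X ω - X' ω|
      = ∑ j ∈ range (n+1), ∑ k ∈ range (n+1),
          Set.indicator (X ⁻¹' {(j:ℝ)} ∩ X' ⁻¹' {(k:ℝ)}) (fun _ => |(j:ℝ) - (k:ℝ)|) ω := by
    filter_upwards [ae_range μ hXm hX, ae_range μ hX'm hX'] with ω h1 h2
    obtain ⟨j₀, hj₀, hje⟩ := h1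
    obtain ⟨k₀, hk₀, hke⟩ := h2
    have hmemX : ∀ j : ℕ, ω ∈ X ⁻¹' {(j:ℝ)} ↔ j = j₀ := by
      intro j
      simp only [Set.mem_preimage, Set.mem_singleton_iff, hje]
      exact_mod_cast eq_comm
    have hmemX' : ∀ k : ℕ, ω ∈ X' ⁻¹' {(k:ℝ)} ↔ k = k₀ := by
      intro k
      simp only [Set.mem_preimage, Set.mem_singleton_iff, hke]
      exact_mod_cast eq_comm
    rw [Finset.sum_eq_single j₀]
    · rw [Finset.sum_eq_single k₀]
      · rw [Set.indicator_of_mem (by rw [Set.mem_inter_iff, hmemX, hmemX']; exact ⟨rfl, rfl⟩)]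
        rw [hje, hke]
      · intro k _ hk
        apply Set.indicator_of_notMem
        rw [Set.mem_inter_iff, hmemX, hmemX']
        tauto
      · intro h; exact absurd hk₀ h
    · intro j _ hj
      apply Finset.sum_eq_zero
      intro k _
      apply Set.indicator_of_notMem
      rw [Set.mem_inter_iff, hmemX, hmemX']
      tauto
    · intro h; exact absurd hj₀ h
  have hms : ∀ j k : ℕ, MeasurableSet (X ⁻¹' {(j:ℝ)} ∩ X' ⁻¹' {(k:ℝ)}) := fun j k =>
    (hXm (measurableSet_singleton _)).inter (hX'm (measurableSet_singleton _))
  rw [integral_congr_ae hae, integral_finset_sum]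
  · have hinner : ∀ j ∈ range (n+1), ∫ ω, (∑ k ∈ range (n+1),
        Set.indicator (X ⁻¹' {(j:ℝ)} ∩ X' ⁻¹' {(k:ℝ)}) (fun _ => |(j:ℝ) - (k:ℝ)|) ω) ∂μ
        = ∑ k ∈ range (n+1), w p n j * w p' n k * |(j:ℝ) - (k:ℝ)| := by
      intro j hj
      rw [integral_finset_sum]
      · apply Finset.sum_congr rfl
        intro k hk
        rw [integral_indicator_const _ (hms j k), measureReal_def]
        rw [hind.measure_inter_preimage_eq_mul _ _ (measurableSet_singleton _)
          (measurableSet_singleton _)]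
        rw [preimage_singleton μ hXm hX hj, preimage_singleton μ hX'm hX' hk]
        rw [ENNReal.toReal_mul, ENNReal.toReal_ofReal (w_nonneg hp0 hp1 n j),
          ENNReal.toReal_ofReal (w_nonneg hp0' hp1' n k), smul_eq_mul]
      · intro k _
        exact (integrable_const _).indicator (hms j k)
    exact Finset.sum_congr rfl hinner
  · intro j _
    apply integrable_finset_sum
    intro k _
    exact (integrable_const _).indicator (hms j k)

end Var


end BinomGap

theorem binomial_expectation_gap_case {Ω : Type*} [MeasurableSpace Ω] (μ : Measure Ω)
    [IsProbabilityMeasure μ]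
    (p q : ℝ) (hp : p ∈ Set.Icc (0 : ℝ) (1/4)) (hq : q ∈ Set.Icc (0 : ℝ) (1/4))
    (n : ℕ) (hn : 16 ≤ n)
    (hsum : 1/2 < (n : ℝ) * (p + q)) (hdiff : Real.sqrt (n * (p + q)) ≤ (n : ℝ) * |p - q|)
    (X X' Y Y' : Ω → ℝ)
    (hXm : Measurable X) (hX'm : Measurable X') (hYm : Measurable Y) (hY'm : Measurable Y')
    (hindep : iIndepFun ![X, X', Y, Y'] μ)
    (hX : Measure.map X μ = binomialMeasure n p)
    (hX' : Measure.map X' μ = binomialMeasure n p)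
    (hY : Measure.map Y μ = binomialMeasure n q)
    (hY' : Measure.map Y' μ = binomialMeasure n q) :
    ∫ ω, (|X ω - Y ω| + |X' ω - Y' ω| - |X ω - X' ω| - |Y ω - Y' ω|) ∂μ ≥
      (1/16) * n * |p - q| := by
  classical
  obtain ⟨hp0, hp4⟩ := hp
  obtain ⟨hq0, hq4⟩ := hq
  have hp1 : p ≤ 1 := by linarith
  have hq1 : q ≤ 1 := by linarith
  have hn0 : (0:ℝ) ≤ n := Nat.cast_nonneg n
  -- independence of the two relevant pairs
  have hXX' : IndepFun X X' μ := by
    have h := hindep.indepFun (i := 0) (j := 1) (by decide)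
    simpa using h
  have hYY' : IndepFun Y Y' μ := by
    have h := hindep.indepFun (i := 2) (j := 3) (by decide)
    simpa using h
  -- integrability
  have iX : Integrable X μ := BinomGap.integrable_of_binom μ hXm hX
  have iX' : Integrable X' μ := BinomGap.integrable_of_binom μ hX'm hX'
  have iY : Integrable Y μ := BinomGap.integrable_of_binom μ hYm hY
  have iY' : Integrable Y' μ := BinomGap.integrable_of_binom μ hY'm hY'
  have i1 : Integrable (fun ω => |X ω - Y ω|) μ := (iX.sub iY).abs
  have i2 : Integrable (fun ω => |X' ω - Y' ω|) μ := (iX'.sub iY').abs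
  have i3 : Integrable (fun ω => |X ω - X' ω|) μ := (iX.sub iX').abs
  have i4 : Integrable (fun ω => |Y ω - Y' ω|) μ := (iY.sub iY').abs
  -- split the integral
  have hsplit : ∫ ω, (|X ω - Y ω| + |X' ω - Y' ω| - |X ω - X' ω| - |Y ω - Y' ω|) ∂μ
      = ((∫ ω, |X ω - Y ω| ∂μ) + (∫ ω, |X' ω - Y' ω| ∂μ))
        - (∫ ω, |X ω - X' ω| ∂μ) - (∫ ω, |Y ω - Y' ω| ∂μ) := by
    have i12 : Integrable (fun ω => |X ω - Y ω| + |X' ω - Y' ω|) μ := i1.add i2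
    have i123 : Integrable (fun ω => |X ω - Y ω| + |X' ω - Y' ω| - |X ω - X' ω|) μ := i12.sub i3
    rw [integral_sub i123 i4, integral_sub i12 i3, integral_add i1 i2]
  -- means
  have hEX : ∫ ω, X ω ∂μ = (n:ℝ) * p := by
    rw [BinomGap.integral_single μ hp0 hp1 hXm hX, BinomGap.moment1]
  have hEX' : ∫ ω, X' ω ∂μ = (n:ℝ) * p := by
    rw [BinomGap.integral_single μ hp0 hp1 hX'm hX', BinomGap.moment1]
  have hEY : ∫ ω, Y ω ∂μ = (n:ℝ) * q := by
    rw [BinomGap.integral_single μ hq0 hq1 hYm hY, BinomGap.moment1]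
  have hEY' : ∫ ω, Y' ω ∂μ = (n:ℝ) * q := by
    rw [BinomGap.integral_single μ hq0 hq1 hY'm hY', BinomGap.moment1]
  set D : ℝ := (n:ℝ) * |p - q| with hD
  have hD0 : 0 ≤ D := mul_nonneg hn0 (abs_nonneg _)
  have habsD : |(n:ℝ) * p - (n:ℝ) * q| = D := by
    rw [← mul_sub, abs_mul, abs_of_nonneg hn0]
  -- lower bounds for the cross terms
  have hlow1 : D ≤ ∫ ω, |X ω - Y ω| ∂μ := by
    have h1 : ∫ ω, (X ω - Y ω) ∂μ = (n:ℝ) * p - (n:ℝ) * q := by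
      rw [integral_sub iX iY, hEX, hEY]
    calc D = |∫ ω, (X ω - Y ω) ∂μ| := by rw [h1, habsD]
      _ ≤ ∫ ω, |X ω - Y ω| ∂μ := by
          simpa [Real.norm_eq_abs] using
            norm_integral_le_integral_norm (μ := μ) (f := fun ω => X ω - Y ω)
  have hlow2 : D ≤ ∫ ω, |X' ω - Y' ω| ∂μ := by
    have h1 : ∫ ω, (X' ω - Y' ω) ∂μ = (n:ℝ) * p - (n:ℝ) * q := by
      rw [integral_sub iX' iY', hEX', hEY']
    calc D = |∫ ω, (X' ω - Y' ω) ∂μ| := by rw [h1, habsD]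
      _ ≤ ∫ ω, |X' ω - Y' ω| ∂μ := by
          simpa [Real.norm_eq_abs] using
            norm_integral_le_integral_norm (μ := μ) (f := fun ω => X' ω - Y' ω)
  -- upper bounds for the same-law pairs
  set A : ℝ := ∫ ω, |X ω - X' ω| ∂μ with hA
  set B : ℝ := ∫ ω, |Y ω - Y' ω| ∂μ with hB
  have hA0 : 0 ≤ A := integral_nonneg fun ω => abs_nonneg _
  have hB0 : 0 ≤ B := integral_nonneg fun ω => abs_nonneg _
  have hAsq : A^2 ≤ (3/2) * ((n:ℝ) * p * (1-p)) := by
    rw [hA, BinomGap.integral_pair μ hp0 hp1 hp0 hp1 hXm hX'm hX hX' hXX']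
    exact BinomGap.gmd p hp0 hp1 n
  have hBsq : B^2 ≤ (3/2) * ((n:ℝ) * q * (1-q)) := by
    rw [hB, BinomGap.integral_pair μ hq0 hq1 hq0 hq1 hYm hY'm hY hY' hYY']
    exact BinomGap.gmd q hq0 hq1 n
  -- combine with hdiff
  set s : ℝ := Real.sqrt ((n:ℝ) * (p + q)) with hs
  have hs0 : 0 ≤ s := Real.sqrt_nonneg _
  have hs2 : s^2 = (n:ℝ) * (p + q) := Real.sq_sqrt (by positivity)
  have hnp2 : 0 ≤ (n:ℝ) * p^2 := by positivity
  have hnq2 : 0 ≤ (n:ℝ) * q^2 := by positivity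
  have hABsq : (A + B)^2 ≤ 3 * s^2 := by
    nlinarith [sq_nonneg (A - B), hAsq, hBsq, hnp2, hnq2, hs2]
  have hsD : s^2 ≤ D^2 := by nlinarith [hdiff, hs0, hD0]
  have hAB : A + B ≤ (31/16) * D := by
    have h3 : (A + B)^2 ≤ ((31/16) * D)^2 := by nlinarith [hABsq, hsD]
    calc A + B = Real.sqrt ((A + B)^2) := (Real.sqrt_sq (by linarith)).symm
      _ ≤ Real.sqrt (((31/16) * D)^2) := Real.sqrt_le_sqrt h3
      _ = (31/16) * D := Real.sqrt_sq (by linarith)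
  rw [ge_iff_le, hsplit]
  have : (1/16) * (n:ℝ) * |p - q| = (1/16) * D := by rw [hD]; ring
  rw [this]
  linarith [hlow1, hlow2, hAB]
end
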